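/- In a Polish space X, a subset E is resolvable if and only if E is a Δ⁰₂ set (i.e., both E and its complement are Fσ, equivalently E is simultaneously Fσ and Gδ). -/

import Mathlib

def Resolvable {X : Type*} [TopologicalSpace X] (E : Set X) : Prop :=
  ∀ F : Set X, IsClosed F → F.Nonempty →
    closure (F ∩ E) ∩ closure (F \ E) ≠ F

/-- `E` is an Fσ set: a countable union of closed sets. -/
def IsFSigma {X : Type*} [TopologicalSpace X] (E : Set X) : Prop :=
  ∃ f : ℕ → Set X, (∀ n, IsClosed (f n)) ∧ E = ⋃ n, f n

open Set Topology TopologicalSpace OrdinalApprox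

section Aux

variable {Y : Type*}

lemma isFSigma_empty [TopologicalSpace Y] : IsFSigma (∅ : Set Y) :=
  ⟨fun _ => ∅, fun _ => isClosed_empty, by simp⟩

lemma isFSigma_of_isOpen [PseudoMetricSpace Y] {U : Set Y} (hU : IsOpen U) : IsFSigma U := by
  refine ⟨fun n => ⋂ y ∈ Uᶜ, {x | 1 / (n + 1 : ℝ) ≤ dist x y}, ?_, ?_⟩
  · intro n
    exact isClosed_iInter fun y => isClosed_iInter fun _ =>
      isClosed_le continuous_const (Continuous.dist continuous_id continuous_const)
  · ext x
    simp only [mem_iUnion, mem_iInter, mem_setOf_eq]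
    constructor
    · intro hx
      obtain ⟨ε, hε, hball⟩ := Metric.isOpen_iff.1 hU x hx
      obtain ⟨n, hn⟩ := exists_nat_one_div_lt hε
      refine ⟨n, fun y hy => ?_⟩
      by_contra hlt
      push_neg at hlt
      refine hy (hball ?_)
      rw [Metric.mem_ball, dist_comm]
      exact lt_trans hlt hn
    · rintro ⟨n, hn⟩
      by_contra hx
      have h1 := hn x hx
      rw [dist_self] at h1
      have h2 : (0:ℝ) < 1 / (n + 1 : ℝ) := by positivity
      linarith

lemma isFSigma_iUnion [TopologicalSpace Y] {s : ℕ → Set Y} (h : ∀ n, IsFSigma (s n)) :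
    IsFSigma (⋃ n, s n) := by
  choose f hf hs using h
  refine ⟨fun k => f k.unpair.1 k.unpair.2, fun k => hf _ _, ?_⟩
  rw [iUnion_unpair fun i j => f i j]
  simp_rw [← hs]

lemma isFSigma_biUnion [TopologicalSpace Y] {ι : Type*} {S : Set ι} (hS : S.Countable)
    {t : ι → Set Y} (h : ∀ i ∈ S, IsFSigma (t i)) : IsFSigma (⋃ i ∈ S, t i) := by
  rcases S.eq_empty_or_nonempty with rfl | hne
  · simpa using isFSigma_empty
  obtain ⟨e, rfl⟩ := hS.exists_eq_range hne
  rw [biUnion_range]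
  exact isFSigma_iUnion fun n => h _ ⟨n, rfl⟩

lemma isFSigma_closed_inter_open [PseudoMetricSpace Y] {C U : Set Y} (hC : IsClosed C)
    (hU : IsOpen U) : IsFSigma (C ∩ U) := by
  obtain ⟨f, hf, rfl⟩ := isFSigma_of_isOpen hU
  exact ⟨fun n => C ∩ f n, fun n => hC.inter (hf n), by rw [inter_iUnion]⟩

unseal OrdinalApprox.gfpApprox OrdinalApprox.lfpApprox in
lemma gfpApprox_def {α : Type u} [CompleteLattice α] (f : α →o α) (x : α) (a : Ordinal.{u}) :
    gfpApprox f x a = sInf ({ f (gfpApprox f x b) | (b : Ordinal) (_ : b < a) } ∪ {x}) := by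
  conv_lhs => unfold gfpApprox
  rw [sInf_union, sInf_singleton, inf_comm]
  congr 1
  exact le_antisymm (le_sInf fun y ⟨b, hb, hy⟩ => hy ▸ iInf₂_le b hb) (le_iInf₂ fun b hb => sInf_le ⟨b, hb, rfl⟩)

end Aux

theorem resolvable_iff_delta02 {X : Type*} [TopologicalSpace X] [PolishSpace X]
    (E : Set X) : Resolvable E ↔ (IsFSigma E ∧ IsGδ E) := by
  classical
  constructor
  · intro hres
    letI := upgradeIsCompletelyMetrizable X
    set f : Set X →o Set X :=
      ⟨fun F => closure (F ∩ E) ∩ closure (F \ E), by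
        intro A B hAB
        exact inter_subset_inter (closure_mono (inter_subset_inter_left _ hAB))
          (closure_mono (diff_subset_diff_left hAB))⟩ with hfdef
    set G : Ordinal → Set X := gfpApprox f ⊤ with hGdef
    have hf_cl : ∀ F, IsClosed (f F) := fun F => isClosed_closure.inter isClosed_closure
    have hGcl : ∀ a, IsClosed (G a) := by
      intro a
      rw [hGdef, gfpApprox_def, sInf_eq_sInter]
      refine isClosed_sInter ?_
      rintro T (⟨b, _, rfl⟩ | rfl)
      · exact hf_cl _
      · exact isClosed_univ
    have hsucc : ∀ a, G (a + 1) = f (G a) := fun a => gfpApprox_add_one f (x := ⊤) le_top a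
    have hanti : Antitone G := fun _ _ h => gfpApprox_antitone f (x := ⊤) h
    have hzero : G 0 = ⊤ := by
      rw [hGdef, gfpApprox_def]
      simp
    have hgfp : f.gfp = ∅ := by
      by_contra h
      exact hres f.gfp (by rw [← f.map_gfp]; exact hf_cl _)
        (nonempty_iff_ne_empty.2 h) f.map_gfp
    obtain ⟨κ, hκ⟩ : ∃ a, G a = ∅ := ⟨_, by rw [hGdef, gfpApprox_ord_eq_gfp, hgfp]⟩
    have key : ∀ x : X, ∃ b, x ∈ G b ∧ x ∉ G (b + 1) := by
      intro x
      have hne : {a : Ordinal | x ∉ G a}.Nonempty := ⟨κ, show x ∉ G κ by rw [hκ]; exact notMem_empty x⟩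
      have ha₀mem : x ∉ G (sInf {a : Ordinal | x ∉ G a}) := csInf_mem hne
      set a₀ := sInf {a : Ordinal | x ∉ G a} with ha₀def
      have hlt : ∀ b < a₀, x ∈ G b := by
        intro b hb
        by_contra h
        exact absurd hb (not_lt_of_ge (csInf_le' h))
      rcases Ordinal.zero_or_succ_or_isSuccLimit a₀ with h0 | ⟨b, hb⟩ | hlim
      · rw [h0, hzero] at ha₀mem
        exact absurd (mem_univ x) ha₀mem
      · refine ⟨b, hlt b ?_, ?_⟩
        · rw [← hb]; exact Order.lt_succ b
        · rw [Ordinal.add_one_eq_succ, hb]; exact ha₀mem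
      · exfalso
        apply ha₀mem
        rw [hGdef, gfpApprox_def, sInf_eq_sInter]
        rw [hGdef] at hsucc hlt
        refine mem_sInter.2 ?_
        rintro T (⟨b, hb, rfl⟩ | rfl)
        · rw [← hsucc b]
          exact hlt _ (by rw [Ordinal.add_one_eq_succ]; exact hlim.succ_lt hb)
        · exact mem_univ x
    -- strictly decreasing stages are countable
    have hScount : {a : Ordinal | (G a \ G (a + 1)).Nonempty}.Countable := by
      set S := {a : Ordinal | (G a \ G (a + 1)).Nonempty} with hSdef
      rcases isEmpty_or_nonempty X with hX | hX
      · convert Set.countable_empty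
        rw [eq_empty_iff_forall_notMem]
        rintro a ⟨y, -⟩
        exact hX.false y
      have hch : ∀ a ∈ S, ∃ U ∈ countableBasis X, ∃ y, y ∈ U ∧ y ∈ G a ∧ U ⊆ (G (a + 1))ᶜ := by
        intro a ha
        obtain ⟨y, hy1, hy2⟩ := ha
        obtain ⟨U, hUB, hyU, hUsub⟩ := (isBasis_countableBasis X).exists_subset_of_mem_open
          (a := y) hy2 (hGcl (a + 1)).isOpen_compl
        exact ⟨U, hUB, y, hyU, hy1, hUsub⟩
      choose! U hUB x hxU hxG hUsub using hch
      have main : ∀ a b, a ∈ S → b ∈ S → U a = U b → a < b → False := by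
        intro a b ha hb hab h
        have hsub : G b ⊆ G (a + 1) :=
          hanti (by rw [Ordinal.add_one_eq_succ]; exact Order.succ_le_of_lt h)
        have h1 : x b ∈ (G (a + 1))ᶜ := hUsub a ha (by rw [hab]; exact hxU b hb)
        exact h1 (hsub (hxG b hb))
      refine Set.countable_of_injective_of_countable_image (f := U) ?_ ?_
      · intro a ha b hb hab
        by_contra hne
        rcases Ne.lt_or_gt hne with h | h
        · exact main a b ha hb hab h
        · exact main b a hb ha hab.symm h
      · exact (countable_countableBasis X).mono (image_subset_iff.2 fun a ha => hUB a ha)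
    -- the two decompositions
    have hsub1 : ∀ a : Ordinal, G a \ closure (G a \ E) ⊆ G a \ G (a + 1) := by
      intro a y hy
      refine ⟨hy.1, fun hy2 => ?_⟩
      rw [hsucc a] at hy2
      exact hy.2 hy2.2
    have hsub2 : ∀ a : Ordinal, G a \ closure (G a ∩ E) ⊆ G a \ G (a + 1) := by
      intro a y hy
      refine ⟨hy.1, fun hy2 => ?_⟩
      rw [hsucc a] at hy2
      exact hy.2 hy2.1
    have hE1 : E = ⋃ a ∈ {a : Ordinal | (G a \ closure (G a \ E)).Nonempty},
        G a \ closure (G a \ E) := by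
      apply Subset.antisymm
      · intro z hz
        obtain ⟨b, hb1, hb2⟩ := key z
        have hnc : z ∉ closure (G b \ E) := by
          intro hcl
          exact hb2 (by rw [hsucc]; exact ⟨subset_closure ⟨hb1, hz⟩, hcl⟩)
        exact mem_biUnion ⟨z, hb1, hnc⟩ ⟨hb1, hnc⟩
      · refine iUnion₂_subset fun a _ => fun z hz => ?_
        by_contra hze
        exact hz.2 (subset_closure ⟨hz.1, hze⟩)
    have hE2 : Eᶜ = ⋃ a ∈ {a : Ordinal | (G a \ closure (G a ∩ E)).Nonempty},
        G a \ closure (G a ∩ E) := by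
      apply Subset.antisymm
      · intro z hz
        obtain ⟨b, hb1, hb2⟩ := key z
        have hnc : z ∉ closure (G b ∩ E) := by
          intro hcl
          exact hb2 (by rw [hsucc]; exact ⟨hcl, subset_closure ⟨hb1, hz⟩⟩)
        exact mem_biUnion ⟨z, hb1, hnc⟩ ⟨hb1, hnc⟩
      · refine iUnion₂_subset fun a _ => fun z hz => ?_
        intro hze
        exact hz.2 (subset_closure ⟨hz.1, hze⟩)
    constructor
    · rw [hE1]
      refine isFSigma_biUnion (hScount.mono fun a ha => ?_) fun a _ => ?_
      · obtain ⟨z, hz⟩ := ha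
        exact ⟨z, hsub1 a hz⟩
      · rw [diff_eq]
        exact isFSigma_closed_inter_open (hGcl a) isClosed_closure.isOpen_compl
    · have hEeq : E = ⋂ a ∈ {a : Ordinal | (G a \ closure (G a ∩ E)).Nonempty},
          (G a \ closure (G a ∩ E))ᶜ := by
        rw [← compl_iUnion₂, ← hE2, compl_compl]
      rw [hEeq]
      refine IsGδ.biInter (hScount.mono fun a ha => ?_) fun a _ => ?_
      · obtain ⟨z, hz⟩ := ha
        exact ⟨z, hsub2 a hz⟩
      · rw [diff_eq, compl_inter, compl_compl]
        exact IsGδ.union (hGcl a).isOpen_compl.isGδ isClosed_closure.isGδ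
  · rintro ⟨⟨c, hc, hcE⟩, hGδ⟩ F hFcl hFne hF
    obtain ⟨U, hU, hUE⟩ := hGδ.eq_iInter_nat
    set d : ℕ → Set X := fun n => (U n)ᶜ with hddef
    have hd : ∀ n, IsClosed (d n) := fun n => (hU n).isClosed_compl
    have hdE : Eᶜ = ⋃ n, d n := by
      rw [hUE, compl_iInter]
    haveI : PolishSpace F := hFcl.polishSpace
    letI := upgradeIsCompletelyMetrizable F
    haveI : Nonempty F := hFne.to_subtype
    set h : ℕ ⊕ ℕ → Set F :=
      Sum.elim (fun n => (↑) ⁻¹' c n) (fun n => (↑) ⁻¹' d n) with hhdef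
    have hhcl : ∀ s, IsClosed (h s) := by
      rintro (n | n)
      · exact (hc n).preimage continuous_subtype_val
      · exact (hd n).preimage continuous_subtype_val
    have hhuniv : ⋃ s, h s = univ := by
      refine eq_univ_iff_forall.2 fun z => ?_
      by_cases hz : (z : X) ∈ E
      · rw [hcE] at hz
        obtain ⟨n, hn⟩ := mem_iUnion.1 hz
        exact mem_iUnion.2 ⟨Sum.inl n, hn⟩
      · have : (z : X) ∈ ⋃ n, d n := by rw [← hdE]; exact hz
        obtain ⟨n, hn⟩ := mem_iUnion.1 this
        exact mem_iUnion.2 ⟨Sum.inr n, hn⟩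
    obtain ⟨s, z, hz⟩ := nonempty_interior_of_iUnion_of_closed hhcl hhuniv
    obtain ⟨t, hts, hto, hzt⟩ := mem_interior.1 hz
    obtain ⟨V, hV, hVt⟩ := isOpen_induced_iff.1 hto
    have hzV : (z : X) ∈ V := by rw [← hVt] at hzt; exact hzt
    have hzF : (z : X) ∈ closure (F ∩ E) ∩ closure (F \ E) := by rw [hF]; exact z.2
    cases s with
    | inl n =>
      have hVFE : V ∩ F ⊆ E := by
        rintro y ⟨hyV, hyF⟩
        have : (⟨y, hyF⟩ : F) ∈ t := by rw [← hVt]; exact hyV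
        have : y ∈ c n := hts this
        rw [hcE]
        exact mem_iUnion.2 ⟨n, this⟩
      obtain ⟨y, hyV, hyF, hyE⟩ := mem_closure_iff.1 hzF.2 V hV hzV
      exact hyE (hVFE ⟨hyV, hyF⟩)
    | inr n =>
      have hVFE : V ∩ F ⊆ Eᶜ := by
        rintro y ⟨hyV, hyF⟩
        have : (⟨y, hyF⟩ : F) ∈ t := by rw [← hVt]; exact hyV
        have : y ∈ d n := hts this
        rw [hdE]
        exact mem_iUnion.2 ⟨n, this⟩
      obtain ⟨y, hyV, hyF, hyE⟩ := mem_closure_iff.1 hzF.1 V hV hzV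
      exact hVFE ⟨hyV, hyF⟩ hyE
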